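/- Let k > −1 and let f be a differentiable function on [2, ∞) such that x^{k+1} exp(−f(x)) → ∞ and x f'(x) → 0 as x → ∞. Then ∫₂^x t^k exp(−f(t)) dt = O(x^{k+1} exp(−f(x))) as x → ∞. -/

import Mathlib

open Real Filter MeasureTheory intervalIntegral

theorem stmt_7 (k : ℝ) (hk : k > -1) (f f' : ℝ → ℝ)
    (hf : ∀ x : ℝ, 2 ≤ x → HasDerivAt f (f' x) x)
    (hgrow : Tendsto (fun x : ℝ => x ^ (k + 1) * Real.exp (-f x)) atTop atTop)
    (hderiv : Tendsto (fun x : ℝ => x * f' x) atTop (nhds 0)) :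
    (fun x : ℝ => ∫ t in (2:ℝ)..x, t ^ k * Real.exp (-f t))
      =O[atTop] fun x => x ^ (k + 1) * Real.exp (-f x) := by
  set φ : ℝ → ℝ := fun t => t ^ k * Real.exp (-f t) with hφ
  set g : ℝ → ℝ := fun x => x ^ (k + 1) * Real.exp (-f x) with hg
  have hca : ∀ x : ℝ, 2 ≤ x → ContinuousAt φ x := by
    intro x hx
    have h0 : x ≠ 0 := by intro h; rw [h] at hx; norm_num at hx
    exact (Real.continuousAt_rpow_const x k (Or.inl h0)).mul
      (Real.continuous_exp.continuousAt.comp ((hf x hx).continuousAt.neg))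
  have hφc : ContinuousOn φ (Set.Ici 2) := fun x hx => (hca x hx).continuousWithinAt
  have hφnonneg : ∀ x : ℝ, 0 < x → 0 ≤ φ x := by
    intro x hx
    have := Real.rpow_nonneg hx.le k
    positivity
  -- derivative of g
  have hg' : ∀ x : ℝ, 2 ≤ x → HasDerivAt g (φ x * ((k + 1) - x * f' x)) x := by
    intro x hx
    have h0 : x ≠ 0 := by intro h; rw [h] at hx; norm_num at hx
    have h1 : HasDerivAt (fun x : ℝ => x ^ (k + 1)) ((k + 1) * x ^ k) x := by
      have := Real.hasDerivAt_rpow_const (x := x) (p := k + 1) (Or.inl h0)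
      simpa using this
    have h2 : HasDerivAt (fun x : ℝ => Real.exp (-f x)) (Real.exp (-f x) * (-f' x)) x :=
      ((hf x hx).neg).exp
    have h3 : HasDerivAt (fun y : ℝ => y ^ (k + 1) * Real.exp (-f y)) _ x := h1.mul h2
    convert h3 using 1
    simp only [hφ]
    rw [Real.rpow_add_one h0]
    ring
  -- choose x₀
  obtain ⟨x₀, hx₀3, hx₀⟩ : ∃ x₀ : ℝ, 3 ≤ x₀ ∧ ∀ x, x₀ ≤ x → |x * f' x| ≤ (k + 1) / 2 := by
    have hpos : (0:ℝ) < (k + 1) / 2 := by linarith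
    have h1 := hderiv.eventually (eventually_abs_sub_lt 0 hpos)
    obtain ⟨a, ha⟩ := eventually_atTop.mp h1
    refine ⟨max a 3, le_max_right _ _, fun x hx => ?_⟩
    have := ha x (le_trans (le_max_left a 3) hx)
    simpa using this.le
  -- interval integrability of φ on subintervals of [2, ∞)
  have hint : ∀ a b : ℝ, 2 ≤ a → 2 ≤ b → IntervalIntegrable φ volume a b := by
    intro a b ha hb
    apply ContinuousOn.intervalIntegrable
    apply hφc.mono
    exact fun t ht => le_trans (le_inf ha hb) ht.1
  -- the comparison function H
  set H : ℝ → ℝ := fun x => (2 / (k + 1)) * g x - ∫ t in x₀..x, φ t with hH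
  have hHD : ∀ x : ℝ, x₀ ≤ x → HasDerivAt H
      ((2 / (k + 1)) * (φ x * ((k + 1) - x * f' x)) - φ x) x := by
    intro x hx
    have hx2 : (2:ℝ) ≤ x := by linarith
    have hopen : IsOpen (Set.Ioi (2:ℝ)) := isOpen_Ioi
    have hcOn : ContinuousOn φ (Set.Ioi 2) := fun t ht =>
      (hca t (le_of_lt ht)).continuousWithinAt
    have hd2 : HasDerivAt (fun u => ∫ t in x₀..u, φ t) (φ x) x := by
      refine intervalIntegral.integral_hasDerivAt_right (hint x₀ x (by linarith) hx2) ?_ (hca x hx2)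
      exact (ContinuousOn.stronglyMeasurableAtFilter hopen hcOn) x (by simp; linarith)
    exact (((hg' x hx2).const_mul (2 / (k + 1))).sub hd2)
  have hmono : MonotoneOn H (Set.Ici x₀) := by
    apply monotoneOn_of_deriv_nonneg (convex_Ici x₀)
    · exact fun x hx => (hHD x hx).continuousAt.continuousWithinAt
    · rw [interior_Ici]
      exact fun x hx => ((hHD x (le_of_lt hx)).differentiableAt).differentiableWithinAt
    · rw [interior_Ici]
      intro x hx
      have hx' : x₀ ≤ x := le_of_lt hx
      rw [(hHD x hx').deriv]
      have h1 : |x * f' x| ≤ (k + 1) / 2 := hx₀ x hx'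
      have h2 : x * f' x ≤ (k + 1) / 2 := le_trans (le_abs_self _) h1
      have h3 : 0 ≤ φ x := hφnonneg x (by linarith)
      have h4 : (k + 1) / 2 ≤ (k + 1) - x * f' x := by linarith
      have h5 : (0:ℝ) < k + 1 := by linarith
      have : φ x ≤ (2 / (k + 1)) * (φ x * ((k + 1) - x * f' x)) := by
        rw [div_mul_eq_mul_div, le_div_iff₀ h5]
        nlinarith
      linarith
  -- final bound
  rw [Asymptotics.isBigO_iff]
  refine ⟨1 + 2 / (k + 1), ?_⟩
  set C : ℝ := ∫ t in (2:ℝ)..x₀, φ t with hC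
  filter_upwards [eventually_ge_atTop x₀, hgrow.eventually_ge_atTop C] with x hx hgx
  have hx2 : (2:ℝ) ≤ x := by linarith
  have h5 : (0:ℝ) < k + 1 := by linarith
  -- split integral
  have hsplit : (∫ t in (2:ℝ)..x, φ t) = C + ∫ t in x₀..x, φ t :=
    (intervalIntegral.integral_add_adjacent_intervals
      (hint 2 x₀ le_rfl (by linarith)) (hint x₀ x (by linarith) hx2)).symm
  -- bound the tail by monotonicity
  have hHle : H x₀ ≤ H x := hmono (Set.self_mem_Ici) hx hx
  have htail : (∫ t in x₀..x, φ t) ≤ (2 / (k + 1)) * g x - (2 / (k + 1)) * g x₀ := by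
    have : (∫ t in x₀..x₀, φ t) = 0 := intervalIntegral.integral_same
    simp only [hH, this, sub_zero] at hHle
    linarith
  have hg0 : 0 ≤ g x₀ := by
    have := Real.rpow_nonneg (show (0:ℝ) ≤ x₀ by linarith) (k + 1)
    have := Real.exp_pos (-f x₀)
    simp only [hg]; positivity
  have hCnonneg : 0 ≤ C := by
    apply intervalIntegral.integral_nonneg (by linarith : (2:ℝ) ≤ x₀)
    intro t ht
    exact hφnonneg t (by linarith [ht.1])
  have hInonneg : 0 ≤ ∫ t in (2:ℝ)..x, φ t := by
    apply intervalIntegral.integral_nonneg hx2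
    intro t ht
    exact hφnonneg t (by linarith [ht.1])
  have hgxC : C ≤ g x := hgx
  have hgxnn : 0 ≤ g x := le_trans hCnonneg hgxC
  have hbound : (∫ t in (2:ℝ)..x, φ t) ≤ (1 + 2 / (k + 1)) * g x := by
    rw [hsplit]
    have h2k : 0 ≤ (2 / (k + 1)) * g x₀ := by positivity
    nlinarith
  calc ‖∫ t in (2:ℝ)..x, φ t‖ = ∫ t in (2:ℝ)..x, φ t := by
        rw [Real.norm_eq_abs, abs_of_nonneg hInonneg]
    _ ≤ (1 + 2 / (k + 1)) * g x := hbound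
    _ ≤ (1 + 2 / (k + 1)) * ‖g x‖ := by
        rw [Real.norm_eq_abs, abs_of_nonneg hgxnn]
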